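/- For any positive integer $l$ and any polynomial $p(x)$, the Laguerre derivative operator satisfies the identity $(\partial_x \cdot x \cdot \partial_x)^l\, p(x) = \partial_x^l \cdot x^l \cdot \partial_x^l\, p(x)$, i.e., applying $l$ times the operator $p \mapsto (x p')'$ is the same as differentiating $l$ times, multiplying by $x^l$, and differentiating $l$ more times. -/
import Mathlib

open Polynomial

private noncomputable def Lag : Polynomial ℝ → Polynomial ℝ :=
  fun q => Polynomial.derivative (Polynomial.X * Polynomial.derivative q)

private lemma Lag_C_mul (a : ℝ) (q : Polynomial ℝ) : Lag (C a * q) = C a * Lag q := by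
  simp only [Lag, derivative_C_mul]
  rw [mul_left_comm, derivative_C_mul]

private lemma Lag_iter_C_mul (l : ℕ) (a : ℝ) (q : Polynomial ℝ) :
    Lag^[l] (C a * q) = C a * Lag^[l] q := by
  induction l generalizing q with
  | zero => simp
  | succ l ih => simp [Function.iterate_succ_apply, Lag_C_mul, ih]

private lemma Lag_add (p q : Polynomial ℝ) : Lag (p + q) = Lag p + Lag q := by
  simp [Lag, mul_add]

private lemma Lag_iter_add (l : ℕ) (p q : Polynomial ℝ) :
    Lag^[l] (p + q) = Lag^[l] p + Lag^[l] q := by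
  induction l generalizing p q with
  | zero => simp
  | succ l ih => simp [Function.iterate_succ_apply, Lag_add, ih]

private lemma der_iter_add (l : ℕ) (p q : Polynomial ℝ) :
    Polynomial.derivative^[l] (p + q) =
      Polynomial.derivative^[l] p + Polynomial.derivative^[l] q := by
  induction l generalizing p q with
  | zero => simp
  | succ l ih => simp [Function.iterate_succ_apply, ih]

private lemma Lag_iter_X_pow (l n : ℕ) :
    Lag^[l] (X ^ n : Polynomial ℝ) =
      C ((n.descFactorial l : ℝ) ^ 2) * X ^ (n - l) := by
  induction l generalizing n with
  | zero => simp
  | succ l ih =>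
    rw [Function.iterate_succ_apply]
    cases n with
    | zero =>
      have h0 : Lag (X ^ 0 : Polynomial ℝ) = 0 := by simp [Lag]
      rw [h0]
      have : (Lag^[l] (0 : Polynomial ℝ)) = 0 := by
        have := Lag_iter_C_mul l 0 0
        simpa using this
      simp [this]
    | succ m =>
      have h1 : Lag (X ^ (m + 1) : Polynomial ℝ) = C ((m + 1 : ℕ) : ℝ) ^ 2 * X ^ m := by
        simp only [Lag, derivative_X_pow, Nat.add_sub_cancel]
        rw [mul_left_comm, derivative_C_mul]
        rw [← pow_succ']
        simp [derivative_X_pow, sq, mul_assoc]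
      rw [h1, sq, mul_assoc, Lag_iter_C_mul, Lag_iter_C_mul, ih,
        Nat.succ_descFactorial_succ, Nat.succ_sub_succ, ← mul_assoc, ← mul_assoc,
        ← C_mul, ← C_mul]
      congr 1
      push_cast
      ring

theorem stmt10 (l : ℕ) (hl : 0 < l) (p : Polynomial ℝ) :
    (fun q => Polynomial.derivative (Polynomial.X * Polynomial.derivative q))^[l] p =
      Polynomial.derivative^[l] (Polynomial.X ^ l * Polynomial.derivative^[l] p) := by
  show Lag^[l] p = _
  induction p using Polynomial.induction_on' with
  | add p q hp hq =>
    simp only [Lag_iter_add, hp, hq, der_iter_add, mul_add]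
  | monomial n a =>
    rw [← Polynomial.C_mul_X_pow_eq_monomial, Lag_iter_C_mul, Lag_iter_X_pow,
      Polynomial.iterate_derivative_C_mul, Polynomial.iterate_derivative_X_pow_eq_C_mul]
    have hcomm : (X : Polynomial ℝ) ^ l * (C a * (C (n.descFactorial l : ℝ) * X ^ (n - l))) =
        C a * (C (n.descFactorial l : ℝ) * X ^ (l + (n - l))) := by
      rw [pow_add]; ring
    rw [hcomm, Polynomial.iterate_derivative_C_mul, Polynomial.iterate_derivative_C_mul]
    rcases le_or_gt l n with h | h
    · rw [Nat.add_sub_cancel' h, Polynomial.iterate_derivative_X_pow_eq_C_mul, sq, C_mul]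
      ring
    · have : n.descFactorial l = 0 := Nat.descFactorial_eq_zero_iff_lt.mpr h
      simp [this]
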